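/- arXiv:1701.06491 — 5 statements merged into one kernel-verified Lean document; each statement's English description precedes it below -/
import Mathlib

section
/- If f is a standard interference function, then for every x ≥ 0 the map h ↦ f(hx)/h on ℝ₊₊ is strictly decreasing: 0 < α₁ < α₂ implies f(α₁x)/α₁ > f(α₂x)/α₂ > 0. -/
open Filter Topology

/-- For a standard interference function `f` and `x ≥ 0`, the map
`h ↦ f (h • x) / h` is strictly decreasing on `ℝ₊₊`:
`0 < α₁ < α₂` implies `f (α₁ • x) / α₁ > f (α₂ • x) / α₂ > 0`. -/
theorem stmt1 {N : ℕ} (f : (Fin N → ℝ) → ℝ)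
    (hpos : ∀ x : Fin N → ℝ, 0 ≤ x → 0 < f x)
    (hscale : ∀ x : Fin N → ℝ, 0 ≤ x → ∀ α : ℝ, 1 < α → f (α • x) < α * f x)
    (hmono : ∀ x y : Fin N → ℝ, 0 ≤ y → y ≤ x → f y ≤ f x) :
    ∀ x : Fin N → ℝ, 0 ≤ x → ∀ α₁ α₂ : ℝ, 0 < α₁ → α₁ < α₂ →
      0 < f (α₂ • x) / α₂ ∧ f (α₂ • x) / α₂ < f (α₁ • x) / α₁ := by
  intro x hx α₁ α₂ h1 h12
  have hα₂ : (0:ℝ) < α₂ := h1.trans h12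
  have hx1 : (0 : Fin N → ℝ) ≤ α₁ • x := smul_nonneg h1.le hx
  have hβ : 1 < α₂ / α₁ := (one_lt_div h1).mpr h12
  have key : f (α₂ • x) < (α₂ / α₁) * f (α₁ • x) := by
    have := hscale (α₁ • x) hx1 (α₂ / α₁) hβ
    rwa [smul_smul, div_mul_cancel₀ _ h1.ne'] at this
  constructor
  · exact div_pos (hpos _ (smul_nonneg hα₂.le hx)) hα₂
  · rw [div_lt_div_iff₀ hα₂ h1]
    calc f (α₂ • x) * α₁ < (α₂ / α₁) * f (α₁ • x) * α₁ := by
          exact mul_lt_mul_of_pos_right key h1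
      _ = f (α₁ • x) * α₂ := by field_simp
end

section
/- If f is a standard interference function, then its asymptotic function f_∞(x) := inf{liminf_n f(hₙxₙ)/hₙ : hₙ → ∞, xₙ → x} satisfies, for every x in the nonnegative orthant, f_∞(x) = lim_{h→∞} f(hx)/h. -/
open Filter Topology

/-- For a standard interference function `f`, the asymptotic function
`f_∞(x) := inf { liminf_n f(hₙ • xₙ)/hₙ : hₙ → ∞, xₙ → x }` (with `xₙ` in the nonnegative
orthant, since `f` is extended by `+∞` outside it) equals `lim_{h→∞} f(h • x)/h` for every
`x` in the nonnegative orthant. -/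
theorem stmt3 {N : ℕ} (f : (Fin N → ℝ) → ℝ)
    (hpos : ∀ x : Fin N → ℝ, 0 ≤ x → 0 < f x)
    (hscale : ∀ x : Fin N → ℝ, 0 ≤ x → ∀ α : ℝ, 1 < α → f (α • x) < α * f x)
    (hmono : ∀ x y : Fin N → ℝ, 0 ≤ y → y ≤ x → f y ≤ f x)
    (x : Fin N → ℝ) (hx : 0 ≤ x) (L : ℝ)
    (hL : Tendsto (fun h : ℝ => f (h • x) / h) atTop (𝓝 L)) :
    sInf {l : ℝ | ∃ (hs : ℕ → ℝ) (xs : ℕ → Fin N → ℝ),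
        Tendsto hs atTop atTop ∧ (∀ n, 0 ≤ xs n) ∧ Tendsto xs atTop (𝓝 x) ∧
        l = Filter.liminf (fun n => f (hs n • xs n) / hs n) atTop} = L := by
  have hL0 : 0 ≤ L := by
    refine ge_of_tendsto hL ?_
    filter_upwards [eventually_gt_atTop (0:ℝ)] with h hh
    exact div_nonneg (hpos _ (smul_nonneg hh.le hx)).le hh.le
  have hmem : L ∈ {l : ℝ | ∃ (hs : ℕ → ℝ) (xs : ℕ → Fin N → ℝ),
      Tendsto hs atTop atTop ∧ (∀ n, 0 ≤ xs n) ∧ Tendsto xs atTop (𝓝 x) ∧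
      l = Filter.liminf (fun n => f (hs n • xs n) / hs n) atTop} := by
    refine ⟨fun n => (n : ℝ), fun _ => x, tendsto_natCast_atTop_atTop, fun _ => hx,
      tendsto_const_nhds, ?_⟩
    exact ((hL.comp tendsto_natCast_atTop_atTop).liminf_eq).symm
  have lower : ∀ l ∈ {l : ℝ | ∃ (hs : ℕ → ℝ) (xs : ℕ → Fin N → ℝ),
      Tendsto hs atTop atTop ∧ (∀ n, 0 ≤ xs n) ∧ Tendsto xs atTop (𝓝 x) ∧
      l = Filter.liminf (fun n => f (hs n • xs n) / hs n) atTop}, L ≤ l := by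
    rintro l ⟨hs, xs, hhs, hxs0, hxsx, rfl⟩
    set v : ℕ → ℝ := fun n => f (hs n • xs n) / hs n with hv
    have key : ∀ ε : ℝ, 0 < ε → ε < 1 → (1 - ε) * L ≤ liminf v atTop := by
      intro ε hε hε1
      have h1ε : (0:ℝ) < 1 - ε := by linarith
      set u : ℕ → ℝ := fun n => (1 - ε) * (f (((1 - ε) * hs n) • x) / ((1 - ε) * hs n))
        with hu'
      have htend : Tendsto (fun n => (1 - ε) * hs n) atTop atTop :=
        hhs.const_mul_atTop h1ε
      have hu : Tendsto u atTop (𝓝 ((1 - ε) * L)) :=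
        (hL.comp htend).const_mul _
      have hcomp : ∀ᶠ n in atTop, (1 - ε) • x ≤ xs n := by
        simp only [Pi.le_def, Pi.smul_apply, smul_eq_mul]
        rw [eventually_all]
        intro i
        rcases eq_or_lt_of_le (hx i) with h0 | h0
        · refine Eventually.of_forall fun n => ?_
          have hx0 : x i = 0 := by simpa using h0.symm
          rw [hx0, mul_zero]
          exact hxs0 n i
        · have h0' : 0 < x i := by simpa using h0
          have hti : Tendsto (fun n => xs n i) atTop (𝓝 (x i)) :=
            tendsto_pi_nhds.mp hxsx i
          have hlt : (1 - ε) * x i < x i := by nlinarith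
          filter_upwards [hti.eventually_const_lt hlt] with n hn
          exact hn.le
      have hev : ∀ᶠ n in atTop, u n ≤ v n := by
        filter_upwards [hhs.eventually_gt_atTop 0, hcomp] with n hn0 hcn
        have e1 : ((1 - ε) * hs n) • x = hs n • ((1 - ε) • x) := by
          rw [smul_smul, mul_comm]
        have hle : f (((1 - ε) * hs n) • x) ≤ f (hs n • xs n) := by
          rw [e1]
          exact hmono _ _ (smul_nonneg hn0.le (smul_nonneg h1ε.le hx))
            (smul_le_smul_of_nonneg_left hcn hn0.le)
        have e2 : u n = f (((1 - ε) * hs n) • x) / hs n := by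
          simp only [hu']
          field_simp
        rw [e2]
        show f (((1 - ε) * hs n) • x) / hs n ≤ f (hs n • xs n) / hs n
        gcongr
      have hubd : IsBoundedUnder (· ≥ ·) atTop u := hu.isBoundedUnder_ge
      have hvbd : IsCoboundedUnder (· ≥ ·) atTop v := by
        refine IsBoundedUnder.isCoboundedUnder_ge ⟨f (x + 1), ?_⟩
        rw [eventually_map]
        have hy0 : (0:(Fin N → ℝ)) ≤ x + 1 := by
          intro i
          have := hx i
          simp only [Pi.zero_apply] at this ⊢
          simp only [Pi.add_apply, Pi.one_apply]
          linarith
        have hxy : ∀ᶠ n in atTop, xs n ≤ x + 1 := by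
          simp only [Pi.le_def]
          rw [eventually_all]
          intro i
          have hti : Tendsto (fun n => xs n i) atTop (𝓝 (x i)) :=
            tendsto_pi_nhds.mp hxsx i
          filter_upwards [hti.eventually_le_const
            (by simp : x i < (x + 1 : Fin N → ℝ) i)] with n hn
          exact hn
        filter_upwards [hhs.eventually_ge_atTop 1, hxy] with n hn1 hn2
        have hn0 : (0:ℝ) < hs n := lt_of_lt_of_le one_pos hn1
        have step1 : f (hs n • xs n) ≤ f (hs n • (x + 1)) :=
          hmono _ _ (smul_nonneg hn0.le fun i => (hxs0 n i)) 
            (smul_le_smul_of_nonneg_left hn2 hn0.le)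
        have step2 : f (hs n • (x + 1)) / hs n ≤ f (x + 1) := by
          rcases eq_or_lt_of_le hn1 with h1 | h1
          · rw [← h1]; simp
          · have := hscale (x + 1) hy0 (hs n) h1
            rw [div_le_iff₀ hn0]
            linarith
        calc f (hs n • xs n) / hs n ≤ f (hs n • (x + 1)) / hs n := by gcongr
          _ ≤ f (x + 1) := step2
      calc (1 - ε) * L = liminf u atTop := hu.liminf_eq.symm
        _ ≤ liminf v atTop := liminf_le_liminf hev hubd hvbd
    refine le_of_forall_pos_le_add fun δ hδ => ?_
    set ε : ℝ := min (1/2) (δ / (L + 1)) with hε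
    have hε0 : 0 < ε := lt_min (by norm_num) (div_pos hδ (by linarith))
    have hε1 : ε < 1 := lt_of_le_of_lt (min_le_left _ _) (by norm_num)
    have h1 := key ε hε0 hε1
    have h2 : ε * L ≤ δ := by
      have h3 : ε ≤ δ / (L + 1) := min_le_right _ _
      have h4 : ε * L ≤ (δ / (L + 1)) * L := by
        apply mul_le_mul_of_nonneg_right h3 hL0
      have h5 : (δ / (L + 1)) * L ≤ δ := by
        rw [div_mul_eq_mul_div, div_le_iff₀ (by linarith : (0:ℝ) < L + 1)]
        nlinarith
      linarith
    nlinarith [h1]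
  exact le_antisymm (csInf_le ⟨L, lower⟩ hmem) (le_csInf ⟨L, hmem⟩ lower)
end

section
/- If a standard interference function f is continuous on the nonnegative orthant, then its asymptotic function f_∞(x) = lim_{h→∞} f(hx)/h is continuous on the nonnegative orthant. -/
open Filter Topology

/-- If a standard interference function `f` is continuous on the nonnegative
orthant, then its asymptotic function `F x = lim_{h→∞} f (h • x) / h` is continuous on the
nonnegative orthant. -/
theorem stmt6 {N : ℕ} (f : (Fin N → ℝ) → ℝ) (F : (Fin N → ℝ) → ℝ)
    (hpos : ∀ x : Fin N → ℝ, 0 ≤ x → 0 < f x)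
    (hscale : ∀ x : Fin N → ℝ, 0 ≤ x → ∀ α : ℝ, 1 < α → f (α • x) < α * f x)
    (hmono : ∀ x y : Fin N → ℝ, 0 ≤ y → y ≤ x → f y ≤ f x)
    (hcont : ContinuousOn f {y : Fin N → ℝ | 0 ≤ y})
    (hF : ∀ x : Fin N → ℝ, 0 ≤ x → Tendsto (fun h : ℝ => f (h • x) / h) atTop (𝓝 (F x))) :
    ContinuousOn F {y : Fin N → ℝ | 0 ≤ y} := by
  -- h ↦ f (h • x) / h is antitone on (0, ∞)
  have hanti : ∀ x : Fin N → ℝ, 0 ≤ x → ∀ a b : ℝ, 0 < a → a < b →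
      f (b • x) / b ≤ f (a • x) / a := by
    intro x hx a b ha hab
    have hb : 0 < b := ha.trans hab
    have h1 : (1:ℝ) < b / a := (one_lt_div ha).2 hab
    have key := hscale (a • x) (smul_nonneg ha.le hx) (b/a) h1
    rw [smul_smul, div_mul_cancel₀ _ ha.ne'] at key
    rw [div_mul_eq_mul_div, lt_div_iff₀ ha] at key
    rw [div_le_div_iff₀ hb ha]
    nlinarith
  -- F x ≤ f (m • x) / m for m > 0
  have hle : ∀ x : Fin N → ℝ, 0 ≤ x → ∀ m : ℝ, 0 < m → F x ≤ f (m • x) / m := by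
    intro x hx m hm
    refine le_of_tendsto (hF x hx) ?_
    filter_upwards [eventually_gt_atTop m] with h hh
    exact hanti x hx m h hm hh
  -- F is nonnegative
  have hFnn : ∀ x : Fin N → ℝ, 0 ≤ x → 0 ≤ F x := by
    intro x hx
    refine ge_of_tendsto (hF x hx) ?_
    filter_upwards [eventually_gt_atTop (0:ℝ)] with h hh
    exact div_nonneg (hpos _ (smul_nonneg hh.le hx)).le hh.le
  -- F is monotone on the orthant
  have hFmono : ∀ x y : Fin N → ℝ, 0 ≤ y → y ≤ x → F y ≤ F x := by
    intro x y hy hyx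
    have hx : 0 ≤ x := hy.trans hyx
    refine le_of_tendsto_of_tendsto (hF y hy) (hF x hx) ?_
    filter_upwards [eventually_gt_atTop (0:ℝ)] with h hh
    have : f (h • y) ≤ f (h • x) :=
      hmono _ _ (smul_nonneg hh.le hy) (smul_le_smul_of_nonneg_left hyx hh.le)
    exact (div_le_div_iff_of_pos_right hh).2 this
  -- F is positively homogeneous
  have hFhom : ∀ x : Fin N → ℝ, 0 ≤ x → ∀ c : ℝ, 0 < c → F (c • x) = c * F x := by
    intro x hx c hc
    have h2 : Tendsto (fun h : ℝ => h * c) atTop atTop :=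
      Tendsto.atTop_mul_const hc tendsto_id
    have h3 := (hF x hx).comp h2
    have h4 : Tendsto (fun h : ℝ => f (h • c • x) / h) atTop (𝓝 (c * F x)) := by
      refine (h3.const_mul c).congr fun h => ?_
      simp only [Function.comp]
      rw [smul_smul, mul_div_assoc', mul_comm h c, mul_div_mul_left _ _ hc.ne']
    exact tendsto_nhds_unique (hF (c • x) (smul_nonneg hc.le hx)) h4
  intro x hx
  have hx' : 0 ≤ x := hx
  rw [ContinuousWithinAt]
  refine tendsto_order.2 ⟨?_, ?_⟩
  · -- lower semicontinuity
    intro a ha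
    rcases lt_or_ge a 0 with ha0 | ha0
    · filter_upwards [self_mem_nhdsWithin] with y hy
      exact ha0.trans_le (hFnn y hy)
    · have hFx : 0 < F x := ha0.trans_lt ha
      have hdiv : a / F x < 1 := (div_lt_one hFx).2 ha
      obtain ⟨c, hc1, hc2⟩ := exists_between hdiv
      have hc0 : 0 < c := lt_of_le_of_lt (div_nonneg ha0 hFx.le) hc1
      have hac : a < c * F x := (div_lt_iff₀ hFx).1 hc1
      have hev : ∀ᶠ y in 𝓝[{y : Fin N → ℝ | 0 ≤ y}] x, c • x ≤ y := by
        have hall : ∀ i : Fin N, ∀ᶠ y in 𝓝[{y : Fin N → ℝ | 0 ≤ y}] x, c * x i ≤ y i := by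
          intro i
          rcases eq_or_lt_of_le (show (0:ℝ) ≤ x i from hx' i) with h0 | h0
          · filter_upwards [self_mem_nhdsWithin] with y hy
            rw [← h0, mul_zero]; exact hy i
          · have hlt : c * x i < x i := by nlinarith
            have ht : Tendsto (fun y : Fin N → ℝ => y i)
                (𝓝[{y : Fin N → ℝ | 0 ≤ y}] x) (𝓝 (x i)) :=
              tendsto_nhdsWithin_of_tendsto_nhds ((continuous_apply i).tendsto x)
            filter_upwards [ht.eventually (lt_mem_nhds hlt)] with y hy
            exact hy.le
        exact (eventually_all.2 hall).mono fun y hy i => by simpa using hy i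
      filter_upwards [hev, self_mem_nhdsWithin] with y hcy hy
      calc a < c * F x := hac
        _ = F (c • x) := (hFhom x hx' c hc0).symm
        _ ≤ F y := hFmono y (c • x) (smul_nonneg hc0.le hx') hcy
  · -- upper semicontinuity
    intro a ha
    have hg : Tendsto (fun n : ℕ => f ((n:ℝ) • x) / n) atTop (𝓝 (F x)) :=
      (hF x hx').comp tendsto_natCast_atTop_atTop
    obtain ⟨n, hn1, hn2⟩ := ((hg.eventually (gt_mem_nhds ha)).and (eventually_ge_atTop 1)).exists
    have hnpos : (0:ℝ) < n := by exact_mod_cast hn2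
    have hmaps : Set.MapsTo (fun y : Fin N → ℝ => (n:ℝ) • y)
        {y : Fin N → ℝ | 0 ≤ y} {y : Fin N → ℝ | 0 ≤ y} := by
      intro y hy
      exact smul_nonneg hnpos.le (show (0 : Fin N → ℝ) ≤ y from hy)
    have hcg : ContinuousWithinAt (fun y : Fin N → ℝ => f ((n:ℝ) • y) / n)
        {y : Fin N → ℝ | 0 ≤ y} x := by
      refine ContinuousWithinAt.div_const ?_ _
      exact (hcont _ (hmaps hx)).comp
        ((continuous_const_smul ((n:ℝ))).continuousWithinAt) hmaps
    filter_upwards [hcg.eventually (gt_mem_nhds hn1), self_mem_nhdsWithin] with y h1 h2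
    exact lt_of_le_of_lt (hle y h2 n hnpos) h1
end

section
/- If a standard interference function f is continuous on the nonnegative orthant, then for every x ≥ 0 and all sequences xₙ → x in ℝ₊^N and hₙ → ∞ in ℝ₊₊, lim_{n→∞} f(hₙxₙ)/hₙ = f_∞(x), where f_∞(x) = lim_{h→∞} f(hx)/h. -/
open Filter Topology

/-- If a standard interference function `f` is continuous on the nonnegative
orthant, then for every `x ≥ 0` and all sequences `xₙ → x` in the nonnegative orthant and
`hₙ → ∞` in `ℝ₊₊`, we have `f (hₙ • xₙ) / hₙ → F x`, where `F x = lim_{h→∞} f (h • x)/h`. -/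
theorem stmt7 {N : ℕ} (f : (Fin N → ℝ) → ℝ) (F : (Fin N → ℝ) → ℝ)
    (hpos : ∀ x : Fin N → ℝ, 0 ≤ x → 0 < f x)
    (hscale : ∀ x : Fin N → ℝ, 0 ≤ x → ∀ α : ℝ, 1 < α → f (α • x) < α * f x)
    (hmono : ∀ x y : Fin N → ℝ, 0 ≤ y → y ≤ x → f y ≤ f x)
    (hcont : ContinuousOn f {y : Fin N → ℝ | 0 ≤ y})
    (hF : ∀ x : Fin N → ℝ, 0 ≤ x → Tendsto (fun h : ℝ => f (h • x) / h) atTop (𝓝 (F x))) :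
    ∀ x : Fin N → ℝ, 0 ≤ x →
      ∀ (xs : ℕ → Fin N → ℝ) (hs : ℕ → ℝ),
        (∀ n, 0 ≤ xs n) → Tendsto xs atTop (𝓝 x) →
        (∀ n, 0 < hs n) → Tendsto hs atTop atTop →
        Tendsto (fun n => f (hs n • xs n) / hs n) atTop (𝓝 (F x)) := by
  intro x hx xs hs hxs hxsx hhs hhstop
  -- monotone decrease of h ↦ f (h • y) / h
  have anti : ∀ y : Fin N → ℝ, 0 ≤ y → ∀ a b : ℝ, 0 < a → a ≤ b →
      f (b • y) / b ≤ f (a • y) / a := by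
    intro y hy a b ha hab
    rcases eq_or_lt_of_le hab with rfl | hlt
    · exact le_refl _
    · have hb : 0 < b := ha.trans hlt
      have hα : 1 < b / a := (one_lt_div ha).2 hlt
      have hsc := hscale (a • y) (smul_nonneg ha.le hy) (b / a) hα
      have hbey : (b / a) • a • y = b • y := by
        rw [smul_smul]; congr 1; field_simp
      rw [hbey] at hsc
      rw [div_le_div_iff₀ hb ha]
      have e : b / a * f (a • y) * a = f (a • y) * b := by field_simp
      have := mul_lt_mul_of_pos_right hsc ha
      linarith
  -- F x is a lower bound of f (h • x) / h
  have hLle : ∀ h : ℝ, 0 < h → F x ≤ f (h • x) / h := by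
    intro h hh
    refine le_of_tendsto (hF x hx) ?_
    exact eventually_atTop.2 ⟨h, fun b hb => anti x hx h b hh hb⟩
  have hL0 : 0 ≤ F x := by
    refine ge_of_tendsto (hF x hx) ?_
    filter_upwards [eventually_ge_atTop (1 : ℝ)] with h hh
    exact (div_pos (hpos _ (smul_nonneg (by linarith) hx)) (by linarith)).le
  refine tendsto_order.2 ⟨?_, ?_⟩
  · -- lower bound
    intro c hc
    set L := F x with hLdef
    set δ : ℝ := (L - c) / (|c| + 1) with hδdef
    have habs : (0 : ℝ) < |c| + 1 := by positivity
    have hδ : 0 < δ := div_pos (by linarith) habs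
    have h1 : δ * |c| < L - c := by
      rw [hδdef, div_mul_eq_mul_div, div_lt_iff₀ habs]
      nlinarith [abs_nonneg c]
    have hcd : (1 + δ) * c < L := by
      nlinarith [mul_le_mul_of_nonneg_left (le_abs_self c) hδ.le]
    have hev : ∀ᶠ n in atTop, ∀ i, x i ≤ (1 + δ) * xs n i := by
      rw [eventually_all]
      intro i
      rcases eq_or_lt_of_le (hx i) with hxi | hxi
      · refine Eventually.of_forall fun n => ?_
        rw [← hxi]
        exact mul_nonneg (by linarith) (hxs n i)
      · have htend : Tendsto (fun n => xs n i) atTop (𝓝 (x i)) :=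
          tendsto_pi_nhds.1 hxsx i
        have hxi' : 0 < x i := by simpa using hxi
        have hlt : x i / (1 + δ) < x i := by
          rw [div_lt_iff₀ (by linarith)]; nlinarith [mul_pos hxi' hδ]
        filter_upwards [htend.eventually (eventually_gt_nhds hlt)] with n hn
        rw [div_lt_iff₀ (by linarith)] at hn
        nlinarith
    filter_upwards [hev] with n hn
    have hle : hs n • x ≤ ((1 + δ) * hs n) • xs n := by
      intro i
      simp only [Pi.smul_apply, smul_eq_mul]
      nlinarith [hn i, hhs n, hxs n i]
    have h1' : f (hs n • x) ≤ f (((1 + δ) * hs n) • xs n) :=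
      hmono _ _ (smul_nonneg (hhs n).le hx) hle
    have h2' : f (((1 + δ) * hs n) • xs n) < (1 + δ) * f (hs n • xs n) := by
      have := hscale (hs n • xs n) (smul_nonneg (hhs n).le (hxs n)) (1 + δ) (by linarith)
      rwa [smul_smul] at this
    have h3' : hs n * L ≤ f (hs n • x) := by
      have := hLle (hs n) (hhs n)
      rw [le_div_iff₀ (hhs n)] at this
      linarith
    rw [lt_div_iff₀ (hhs n)]
    nlinarith [hhs n, mul_lt_mul_of_pos_left hcd (hhs n)]
  · -- upper bound
    intro c hc
    have hev1 : ∀ᶠ h in atTop, f (h • x) / h < c :=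
      (hF x hx).eventually (eventually_lt_nhds hc)
    obtain ⟨h₀, hh₀⟩ := eventually_atTop.1 hev1
    set h : ℝ := max h₀ 1 with hhdef
    have hh : (0 : ℝ) < h := lt_of_lt_of_le one_pos (le_max_right _ _)
    have hfh : f (h • x) / h < c := hh₀ h (le_max_left _ _)
    have htend : Tendsto (fun n => h • xs n) atTop (𝓝[{y : Fin N → ℝ | 0 ≤ y}] (h • x)) := by
      rw [tendsto_nhdsWithin_iff]
      exact ⟨hxsx.const_smul h, Eventually.of_forall fun n => smul_nonneg hh.le (hxs n)⟩
    have hfcont : Tendsto f (𝓝[{y : Fin N → ℝ | 0 ≤ y}] (h • x)) (𝓝 (f (h • x))) :=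
      hcont (h • x) (smul_nonneg hh.le hx)
    have hdiv : Tendsto (fun n => f (h • xs n) / h) atTop (𝓝 (f (h • x) / h)) :=
      (hfcont.comp htend).div_const h
    filter_upwards [hdiv.eventually (eventually_lt_nhds hfh),
      hhstop.eventually_ge_atTop h] with n h1 h2
    exact lt_of_le_of_lt (anti (xs n) (hxs n) h (hs n) hh h2) h1
end

section
/- Let T : ℝ₊^N → ℝ₊₊^N be a continuous standard interference mapping with asymptotic mapping T_∞ (componentwise asymptotic functions). Let p̄ₙ → ∞, let (pₙ, λₙ) solve T(pₙ) = λₙpₙ, ‖pₙ‖_a = p̄ₙ, set xₙ := pₙ/‖pₙ‖_a, and suppose λₙ → λ_∞. Then every accumulation point x_∞ of (xₙ) satisfies T_∞(x_∞) = λ_∞·x_∞ and ‖x_∞‖_a = 1. -/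
open Filter Topology

lemma key {N : ℕ} (f : (Fin N → ℝ) → ℝ) (L : ℝ)
    (hmono : ∀ x y : Fin N → ℝ, 0 ≤ y → y ≤ x → f y ≤ f x)
    (hscale : ∀ x : Fin N → ℝ, 0 ≤ x → ∀ α : ℝ, 1 < α → f (α • x) < α * f x)
    (hcont : ContinuousOn f {y : Fin N → ℝ | 0 ≤ y})
    (x : Fin N → ℝ) (hx : 0 ≤ x)
    (hL : Tendsto (fun h : ℝ => f (h • x) / h) atTop (𝓝 L))
    (xs : ℕ → Fin N → ℝ) (hxs : ∀ n, 0 ≤ xs n)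
    (hxsx : Tendsto xs atTop (𝓝 x))
    (hs : ℕ → ℝ) (hhs : Tendsto hs atTop atTop) :
    Tendsto (fun n => f (hs n • xs n) / hs n) atTop (𝓝 L) := by
  rw [Metric.tendsto_nhds]
  intro ε hε
  -- choose h₀ with f (h₀ • x) / h₀ < L + ε/2
  obtain ⟨h₀, hh₀pos, hh₀⟩ : ∃ h₀ : ℝ, 0 < h₀ ∧ f (h₀ • x) / h₀ < L + ε / 2 := by
    have h1 := Metric.tendsto_nhds.mp hL (ε / 2) (by positivity)
    obtain ⟨h₀, hd, hp⟩ := (h1.and (eventually_gt_atTop 0)).exists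
    rw [Real.dist_eq] at hd
    exact ⟨h₀, hp, by linarith [(abs_lt.mp hd).2]⟩
  -- continuity : f (h₀ • xs n) → f (h₀ • x)
  have hmemx : h₀ • x ∈ {y : Fin N → ℝ | 0 ≤ y} := smul_nonneg hh₀pos.le hx
  have hcw : Tendsto (fun n => f (h₀ • xs n)) atTop (𝓝 (f (h₀ • x))) := by
    refine (hcont _ hmemx).tendsto.comp ?_
    rw [tendsto_nhdsWithin_iff]
    exact ⟨hxsx.const_smul h₀, Eventually.of_forall fun n => smul_nonneg hh₀pos.le (hxs n)⟩
  have hupper : ∀ᶠ n in atTop, f (hs n • xs n) / hs n < L + ε := by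
    have e1 : ∀ᶠ n in atTop, h₀ ≤ hs n := hhs.eventually_ge_atTop h₀
    have e2 : ∀ᶠ n in atTop, f (h₀ • xs n) / h₀ < L + ε :=
      ((hcw.div_const h₀).eventually_lt_const (by linarith))
    filter_upwards [e1, e2] with n hn1 hn2
    have hspos : 0 < hs n := lt_of_lt_of_le hh₀pos hn1
    rcases eq_or_lt_of_le hn1 with heq | hlt
    · rw [← heq]; exact hn2
    · have hα : 1 < hs n / h₀ := (one_lt_div hh₀pos).mpr hlt
      have := hscale (h₀ • xs n) (smul_nonneg hh₀pos.le (hxs n)) _ hα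
      rw [smul_smul, div_mul_cancel₀ _ (ne_of_gt hh₀pos)] at this
      have h3 : f (hs n • xs n) / hs n < f (h₀ • xs n) / h₀ := by
        rw [div_lt_div_iff₀ hspos hh₀pos]
        rw [div_mul_eq_mul_div, lt_div_iff₀ hh₀pos] at this
        linarith
      linarith
  -- lower bound
  set δ : ℝ := min (1/2) (ε / (4 * (|L| + 1))) with hδdef
  have hδpos : 0 < δ := lt_min (by norm_num) (by positivity)
  have hδlt1 : δ < 1 := lt_of_le_of_lt (min_le_left _ _) (by norm_num)
  have hδε : δ * (|L| + 1) ≤ ε / 4 := by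
    have := min_le_right (1/2) (ε / (4 * (|L| + 1)))
    have hpos : (0:ℝ) < |L| + 1 := by positivity
    calc δ * (|L| + 1) ≤ (ε / (4 * (|L| + 1))) * (|L| + 1) := by
          exact mul_le_mul_of_nonneg_right this hpos.le
      _ = ε / 4 := by field_simp
  have hxge : ∀ᶠ n in atTop, (1 - δ) • x ≤ xs n := by
    have : ∀ i, ∀ᶠ n in atTop, ((1 - δ) • x) i ≤ xs n i := by
      intro i
      have hxi0 : (0:ℝ) ≤ x i := by simpa using hx i
      rcases eq_or_lt_of_le hxi0 with h0 | h0
      · exact Eventually.of_forall fun n => by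
          simp only [Pi.smul_apply, smul_eq_mul, ← h0, mul_zero]
          simpa using hxs n i
      · have hxi : Tendsto (fun n => xs n i) atTop (𝓝 (x i)) := (tendsto_pi_nhds.mp hxsx) i
        have hlt : (1 - δ) * x i < x i := by nlinarith [mul_pos hδpos h0]
        exact (hxi.eventually_const_lt hlt).mono fun n hn => le_of_lt (by
          simpa [Pi.smul_apply, smul_eq_mul] using hn)
    exact (eventually_all.mpr this).mono fun n hn => hn
  have hg : Tendsto (fun n => f (((1 - δ) * hs n) • x) / ((1 - δ) * hs n)) atTop (𝓝 L) := by
    have : Tendsto (fun n => (1 - δ) * hs n) atTop atTop :=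
      hhs.const_mul_atTop (by linarith)
    exact hL.comp this
  have hlower : ∀ᶠ n in atTop, L - ε < f (hs n • xs n) / hs n := by
    have e1 : ∀ᶠ n in atTop, 0 < hs n := hhs.eventually_gt_atTop 0
    have e2 : ∀ᶠ n in atTop, L - ε / 4 < f (((1 - δ) * hs n) • x) / ((1 - δ) * hs n) :=
      hg.eventually_const_lt (by linarith)
    filter_upwards [e1, e2, hxge] with n hn1 hn2 hn3
    have hle : f (hs n • ((1 - δ) • x)) ≤ f (hs n • xs n) :=
      hmono _ _ (smul_nonneg hn1.le (smul_nonneg (by linarith) hx))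
        (smul_le_smul_of_nonneg_left hn3 hn1.le)
    have heq : hs n • ((1 - δ) • x) = ((1 - δ) * hs n) • x := by
      rw [smul_smul, mul_comm]
    rw [heq] at hle
    have h4 : (1 - δ) * (f (((1 - δ) * hs n) • x) / ((1 - δ) * hs n))
        = f (((1 - δ) * hs n) • x) / hs n := by
      have : (1 - δ) ≠ 0 := by linarith
      field_simp
    have h5 : f (((1 - δ) * hs n) • x) / hs n ≤ f (hs n • xs n) / hs n :=
      (div_le_div_iff_of_pos_right hn1).mpr hle
    have h6 : (1 - δ) * (L - ε / 4) ≤ (1 - δ) * (f (((1 - δ) * hs n) • x) / ((1 - δ) * hs n)) :=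
      mul_le_mul_of_nonneg_left hn2.le (by linarith)
    have h7 : L - ε < (1 - δ) * (L - ε / 4) := by
      nlinarith [le_abs_self L, neg_abs_le L, abs_nonneg L]
    rw [h4] at h6
    linarith
  filter_upwards [hupper, hlower] with n h1 h2
  rw [Real.dist_eq, abs_sub_lt_iff]
  constructor <;> linarith

/-- Let `T` be a continuous standard interference mapping with asymptotic
mapping `Tinf` (componentwise asymptotic functions). Let `pbar n → ∞`, let `(p n, lam n)`
solve `T (p n) = lam n • p n`, `na (p n) = pbar n`, set `x n := (na (p n))⁻¹ • p n`, and
suppose `lam n → lamInf`. Then every accumulation point `xInf` of `(x n)` satisfies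
`Tinf xInf = lamInf • xInf` and `na xInf = 1`. -/
theorem stmt12 {N : ℕ} (T Tinf : (Fin N → ℝ) → (Fin N → ℝ))
    (na : (Fin N → ℝ) → ℝ)
    (hTpos : ∀ x : Fin N → ℝ, 0 ≤ x → ∀ i, 0 < T x i)
    (hTmono : ∀ x y : Fin N → ℝ, 0 ≤ y → y ≤ x → T y ≤ T x)
    (hTscale : ∀ x : Fin N → ℝ, 0 ≤ x → ∀ α : ℝ, 1 < α → ∀ i, T (α • x) i < α * T x i)
    (hTcont : ContinuousOn T {y : Fin N → ℝ | 0 ≤ y})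
    (hTinf : ∀ x : Fin N → ℝ, 0 ≤ x →
      ∀ i, Tendsto (fun h : ℝ => T (h • x) i / h) atTop (𝓝 (Tinf x i)))
    (hna_mono : ∀ x y : Fin N → ℝ, 0 ≤ x → x ≤ y → na x ≤ na y)
    (hna_homog : ∀ (c : ℝ) (x : Fin N → ℝ), 0 ≤ c → na (c • x) = c * na x)
    (hna_cont : Continuous na)
    (pbar : ℕ → ℝ) (p : ℕ → Fin N → ℝ) (lam : ℕ → ℝ) (lamInf : ℝ)
    (hpbar_pos : ∀ n, 0 < pbar n)
    (hpbar : Tendsto pbar atTop atTop)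
    (hsol : ∀ n, (∀ i, 0 < p n i) ∧ 0 < lam n ∧
      T (p n) = lam n • p n ∧ na (p n) = pbar n)
    (hlam : Tendsto lam atTop (𝓝 lamInf))
    (xInf : Fin N → ℝ)
    (hacc : ∃ φ : ℕ → ℕ, StrictMono φ ∧
      Tendsto (fun n => (na (p (φ n)))⁻¹ • p (φ n)) atTop (𝓝 xInf)) :
    Tinf xInf = lamInf • xInf ∧ na xInf = 1 := by
  obtain ⟨φ, hφ, hxφ⟩ := hacc
  have hnap : ∀ n, na (p n) = pbar n := fun n => (hsol n).2.2.2
  have hnapos : ∀ n, 0 < na (p n) := fun n => (hnap n) ▸ hpbar_pos n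
  set xs : ℕ → Fin N → ℝ := fun n => (na (p (φ n)))⁻¹ • p (φ n) with hxsdef
  have hxsnn : ∀ n, 0 ≤ xs n := by
    intro n i
    have := (hsol (φ n)).1 i
    have h2 := (hnapos (φ n))
    simp only [hxsdef, Pi.smul_apply, smul_eq_mul]
    positivity
  have hxInf0 : (0 : Fin N → ℝ) ≤ xInf := by
    intro i
    have hxi : Tendsto (fun n => xs n i) atTop (𝓝 (xInf i)) := (tendsto_pi_nhds.mp hxφ) i
    have : (0:ℝ) ≤ xInf i := ge_of_tendsto' hxi fun n => by simpa using hxsnn n i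
    simpa using this
  have hsmul : ∀ n, (na (p (φ n))) • xs n = p (φ n) := by
    intro n
    simp only [hxsdef, smul_smul]
    rw [mul_inv_cancel₀ (ne_of_gt (hnapos (φ n))), one_smul]
  have hhs : Tendsto (fun n => na (p (φ n))) atTop atTop := by
    have : (fun n => na (p (φ n))) = fun n => pbar (φ n) := by funext n; exact hnap (φ n)
    rw [this]
    exact hpbar.comp hφ.tendsto_atTop
  have hlamφ : Tendsto (fun n => lam (φ n)) atTop (𝓝 lamInf) := hlam.comp hφ.tendsto_atTop
  constructor
  · funext i
    have h1 : Tendsto (fun n => T (na (p (φ n)) • xs n) i / na (p (φ n))) atTop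
        (𝓝 (Tinf xInf i)) := by
      refine key (fun y => T y i) (Tinf xInf i)
        (fun x y h1 h2 => hTmono x y h1 h2 i)
        (fun x hx α hα => hTscale x hx α hα i)
        ((continuous_apply i).comp_continuousOn hTcont)
        xInf hxInf0 (hTinf xInf hxInf0 i) xs hxsnn hxφ _ hhs
    have h2 : (fun n => T (na (p (φ n)) • xs n) i / na (p (φ n)))
        = fun n => lam (φ n) * xs n i := by
      funext n
      rw [hsmul n, (hsol (φ n)).2.2.1]
      simp only [Pi.smul_apply, smul_eq_mul, hxsdef]
      field_simp
    rw [h2] at h1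
    have h3 : Tendsto (fun n => lam (φ n) * xs n i) atTop (𝓝 (lamInf * xInf i)) :=
      hlamφ.mul ((tendsto_pi_nhds.mp hxφ) i)
    have := tendsto_nhds_unique h1 h3
    simpa [Pi.smul_apply, smul_eq_mul] using this
  · have hone : ∀ n, na (xs n) = 1 := by
      intro n
      simp only [hxsdef]
      rw [hna_homog _ _ (inv_nonneg.mpr (hnapos (φ n)).le),
        inv_mul_cancel₀ (ne_of_gt (hnapos (φ n)))]
    have h1 : Tendsto (fun n => na (xs n)) atTop (𝓝 (na xInf)) :=
      (hna_cont.tendsto xInf).comp hxφ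
    have h2 : Tendsto (fun n => na (xs n)) atTop (𝓝 1) := by
      simp only [hone]; exact tendsto_const_nhds
    exact tendsto_nhds_unique h1 h2
end
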